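/- For every τ ∈ ℝ one has P(τ) = sech(πτ) − i·tanh(πτ); in particular |P(τ)| = 1 for all τ ∈ ℝ. -/

import Mathlib

/-- P(τ) := Γ((3−2iτ)/4)Γ((1+2iτ)/4) / (Γ((3+2iτ)/4)Γ((1−2iτ)/4)). -/
noncomputable def Pfun (τ : ℝ) : ℂ :=
  Complex.Gamma ((3 - 2 * Complex.I * τ) / 4) * Complex.Gamma ((1 + 2 * Complex.I * τ) / 4) /
    (Complex.Gamma ((3 + 2 * Complex.I * τ) / 4) * Complex.Gamma ((1 - 2 * Complex.I * τ) / 4))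

/-- For every τ ∈ ℝ one has P(τ) = sech(πτ) − i tanh(πτ); in particular |P(τ)| = 1. -/
theorem Pfun_eq_sech_sub_I_tanh (τ : ℝ) :
    Pfun τ = ((1 / Real.cosh (Real.pi * τ) : ℝ) : ℂ)
      - Complex.I * ((Real.tanh (Real.pi * τ) : ℝ) : ℂ) ∧
    ‖Pfun τ‖ = 1 := by
  set x : ℝ := Real.pi * τ / 2 with hx
  set c : ℝ := Real.cosh x with hcdef
  set s : ℝ := Real.sinh x with hsdef
  have hpyth : c ^ 2 - s ^ 2 = 1 := Real.cosh_sq_sub_sinh_sq x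
  have hpythC : (c : ℂ) ^ 2 - (s : ℂ) ^ 2 = 1 := by exact_mod_cast hpyth
  have hcosh2 : Real.cosh (Real.pi * τ) = c ^ 2 + s ^ 2 := by
    have h : Real.pi * τ = x + x := by rw [hx]; ring
    rw [h, Real.cosh_add]; ring
  have hsinh2 : Real.sinh (Real.pi * τ) = 2 * c * s := by
    have h : Real.pi * τ = x + x := by rw [hx]; ring
    rw [h, Real.sinh_add]; ring
  have hcpos : 0 < c := Real.cosh_pos x
  have hC2pos : 0 < Real.cosh (Real.pi * τ) := Real.cosh_pos _
  -- sine values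
  have hS : Real.sin (3 * Real.pi / 4) = Real.cos (Real.pi / 4) := by
    have h : 3 * Real.pi / 4 = Real.pi - Real.pi / 4 := by ring
    rw [h, Real.sin_pi_sub, Real.sin_pi_div_four, Real.cos_pi_div_four]
  have hC : Real.cos (3 * Real.pi / 4) = -Real.cos (Real.pi / 4) := by
    have h : 3 * Real.pi / 4 = Real.pi - Real.pi / 4 := by ring
    rw [h, Real.cos_pi_sub]
  set S : ℝ := Real.cos (Real.pi / 4) with hSdef
  have hSne : S ≠ 0 := by rw [hSdef, Real.cos_pi_div_four]; positivity
  have ha : Complex.sin ((Real.pi : ℂ) * ((3 - 2 * Complex.I * τ) / 4))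
      = (S : ℂ) * ((c : ℂ) + Complex.I * (s : ℂ)) := by
    have harg : (Real.pi : ℂ) * ((3 - 2 * Complex.I * τ) / 4)
        = ((3 * Real.pi / 4 : ℝ) : ℂ) + ((-x : ℝ) : ℂ) * Complex.I := by
      push_cast [hx]; ring
    rw [harg, Complex.sin_add, Complex.sin_mul_I, Complex.cos_mul_I,
      ← Complex.ofReal_sin, ← Complex.ofReal_cos, ← Complex.ofReal_sinh,
      ← Complex.ofReal_cosh, hS, hC, Real.sinh_neg, Real.cosh_neg]
    rw [Complex.ofReal_neg, Complex.ofReal_neg]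
    ring
  have hb : Complex.sin ((Real.pi : ℂ) * ((3 + 2 * Complex.I * τ) / 4))
      = (S : ℂ) * ((c : ℂ) - Complex.I * (s : ℂ)) := by
    have harg : (Real.pi : ℂ) * ((3 + 2 * Complex.I * τ) / 4)
        = ((3 * Real.pi / 4 : ℝ) : ℂ) + ((x : ℝ) : ℂ) * Complex.I := by
      push_cast [hx]; ring
    rw [harg, Complex.sin_add, Complex.sin_mul_I, Complex.cos_mul_I,
      ← Complex.ofReal_sin, ← Complex.ofReal_cos, ← Complex.ofReal_sinh,
      ← Complex.ofReal_cosh, hS, hC]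
    rw [Complex.ofReal_neg]
    ring
  -- nonvanishing
  have hd : (c : ℂ) + Complex.I * (s : ℂ) ≠ 0 := by
    intro h
    have := congrArg Complex.re h
    simp at this
    linarith
  have hd' : (c : ℂ) - Complex.I * (s : ℂ) ≠ 0 := by
    intro h
    have := congrArg Complex.re h
    simp at this
    linarith
  have hπ : (Real.pi : ℂ) ≠ 0 := by exact_mod_cast Real.pi_ne_zero
  have hSc : (S : ℂ) ≠ 0 := by exact_mod_cast hSne
  have hcne : (c : ℂ) ^ 2 + (s : ℂ) ^ 2 ≠ 0 := by
    have : (0 : ℝ) < c ^ 2 + s ^ 2 := by nlinarith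
    exact_mod_cast ne_of_gt this
  -- reflection formula
  have h1 : ((1 : ℂ) + 2 * Complex.I * τ) / 4 = 1 - (3 - 2 * Complex.I * τ) / 4 := by ring
  have h2 : ((1 : ℂ) - 2 * Complex.I * τ) / 4 = 1 - (3 + 2 * Complex.I * τ) / 4 := by ring
  have hP : Pfun τ = ((c : ℂ) - Complex.I * s) / ((c : ℂ) + Complex.I * s) := by
    rw [Pfun, h1, h2, Complex.Gamma_mul_Gamma_one_sub, Complex.Gamma_mul_Gamma_one_sub,
      ha, hb]
    field_simp
  have hEq : Pfun τ = ((1 / Real.cosh (Real.pi * τ) : ℝ) : ℂ)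
      - Complex.I * ((Real.tanh (Real.pi * τ) : ℝ) : ℂ) := by
    have key : ((c : ℂ) - Complex.I * s) / ((c : ℂ) + Complex.I * s)
        = (1 - Complex.I * (2 * c * s)) / ((c : ℂ) ^ 2 + (s : ℂ) ^ 2) := by
      rw [div_eq_div_iff hd hcne]
      linear_combination ((c : ℂ) + Complex.I * (s : ℂ)) * hpythC +
        (2 * (c : ℂ) * (s : ℂ) ^ 2) * Complex.I_sq
    rw [hP, key, Real.tanh_eq_sinh_div_cosh, hcosh2, hsinh2]
    push_cast
    ring
  refine ⟨hEq, ?_⟩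
  rw [hEq]
  have hu : Real.tanh (Real.pi * τ) = Real.sinh (Real.pi * τ) / Real.cosh (Real.pi * τ) :=
    Real.tanh_eq_sinh_div_cosh _
  rw [Complex.norm_def, Complex.normSq_apply]
  simp only [Complex.sub_re, Complex.sub_im, Complex.ofReal_re, Complex.ofReal_im,
    Complex.mul_re, Complex.mul_im, Complex.I_re, Complex.I_im]
  rw [Real.sqrt_eq_one]
  have hC2 : Real.cosh (Real.pi * τ) ≠ 0 := ne_of_gt hC2pos
  have hps : Real.cosh (Real.pi * τ) ^ 2 - Real.sinh (Real.pi * τ) ^ 2 = 1 :=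
    Real.cosh_sq_sub_sinh_sq _
  rw [hu]
  field_simp
  nlinarith [hps]
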